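/- Let c : ℕ → ℕ (indexed from 1) be strictly increasing with c(1) = 1, c(2) = 4, and for every n ≥ 2: c(n+1) = c(n) + 1 if the condition “n+1 occurs among c(1), …, c(n)” holds exactly when c(n) is even, and c(n+1) = c(n) + 2 otherwise. Then every odd integer m ≥ 7 occurs as a term of the sequence: for every odd m ≥ 7 there exists n with c(n) = m. -/
import Mathlib


/-- The sequence A079000: strictly increasing, `c 1 = 1`, `c 2 = 4`, and for `n ≥ 2`,
`c (n+1) = c n + 1` when ((n+1) occurs among `c 1, …, c n`) ↔ (`c n` is even),
and `c (n+1) = c n + 2` otherwise. -/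
def IsA079000 (c : ℕ → ℕ) : Prop :=
  (∀ ⦃m n : ℕ⦄, 1 ≤ m → m < n → c m < c n) ∧ c 1 = 1 ∧ c 2 = 4 ∧
    ∀ n, 2 ≤ n →
      (((∃ i, 1 ≤ i ∧ i ≤ n ∧ c i = n + 1) ↔ Even (c n)) → c (n + 1) = c n + 1) ∧
      (¬ ((∃ i, 1 ≤ i ∧ i ≤ n ∧ c i = n + 1) ↔ Even (c n)) → c (n + 1) = c n + 2)

theorem a079000_odd_values (c : ℕ → ℕ) (hc : IsA079000 c) :
    ∀ m : ℕ, Odd m → 7 ≤ m → ∃ n : ℕ, 1 ≤ n ∧ c n = m := by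
  obtain ⟨mono, h1, h2, hrec⟩ := hc
  -- lower bound `n + 2 ≤ c n` for `n ≥ 2`
  have lower : ∀ n, 2 ≤ n → n + 2 ≤ c n := by
    intro n hn
    induction n, hn using Nat.le_induction with
    | base => rw [h2]
    | succ n hn ih =>
      have h' := mono (show 1 ≤ n by omega) (show n < n + 1 by omega)
      omega
  -- step is +1 or +2
  have step : ∀ n, 2 ≤ n → c (n+1) = c n + 1 ∨ c (n+1) = c n + 2 := by
    intro n hn
    by_cases h : (∃ i, 1 ≤ i ∧ i ≤ n ∧ c i = n + 1) ↔ Even (c n)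
    · exact Or.inl ((hrec n hn).1 h)
    · exact Or.inr ((hrec n hn).2 h)
  -- membership/parity invariant
  have S : ∀ n, 2 ≤ n → ((∃ i, 1 ≤ i ∧ i ≤ n ∧ c i = n + 1) ↔ Odd (c (n+1))) := by
    intro n hn
    by_cases h : (∃ i, 1 ≤ i ∧ i ≤ n ∧ c i = n + 1) ↔ Even (c n)
    · rw [(hrec n hn).1 h]
      have hp : Odd (c n + 1) ↔ Even (c n) := by simp [parity_simps]
      rw [hp]; exact h
    · rw [(hrec n hn).2 h]
      have hp : Odd (c n + 2) ↔ Odd (c n) := by simp [parity_simps]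
      rw [hp, ← Nat.not_even_iff_odd]
      constructor
      · intro hP he
        exact h (iff_of_true hP he)
      · intro hne
        by_contra hnP
        exact h (iff_of_false hnP hne)
  -- index bound for witnesses
  have idxle : ∀ i n, 1 ≤ i → c i = n + 1 → 4 ≤ n + 1 → i ≤ n := by
    intro i n hi hci hn
    rcases Nat.lt_or_ge i 2 with h | h
    · interval_cases i <;> omega
    · have := lower i h
      omega
  -- small values
  have c3 : c 3 = 6 := by
    have hni : ¬ ((∃ i, 1 ≤ i ∧ i ≤ 2 ∧ c i = 2 + 1) ↔ Even (c 2)) := by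
      intro hiff
      have he : Even (c 2) := by rw [h2]; decide
      obtain ⟨i, hi1, hi2, hie⟩ := hiff.mpr he
      interval_cases i <;> omega
    have := (hrec 2 le_rfl).2 hni
    rw [h2] at this
    exact this
  have c4 : c 4 = 7 := by
    have he : Even (c 3) := by rw [c3]; decide
    have := (hrec 3 (by omega)).1
      (iff_of_true ⟨2, by omega, by omega, by rw [h2]⟩ he)
    rw [c3] at this
    exact this
  -- every n ≥ 4: n or n+1 is a value (with index ≥ 2)
  have isValue : ∀ n, 4 ≤ n → ∃ j, 2 ≤ j ∧ (c j = n ∨ c j = n + 1) := by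
    intro n hn
    induction n, hn using Nat.le_induction with
    | base => exact ⟨2, le_rfl, Or.inl h2⟩
    | succ n hn ih =>
      obtain ⟨j, hj, hcj⟩ := ih
      rcases hcj with h' | h'
      · rcases step j hj with hs | hs
        · exact ⟨j + 1, by omega, Or.inl (by omega)⟩
        · exact ⟨j + 1, by omega, Or.inr (by omega)⟩
      · exact ⟨j, hj, Or.inl h'⟩
  -- if c n is even (n ≥ 3) the step is +1
  have Q : ∀ n, 3 ≤ n → Even (c n) → c (n+1) = c n + 1 := by
    intro n hn he
    rcases Nat.eq_or_lt_of_le hn with h3 | h4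
    · subst h3
      rw [c4, c3]
    · -- n ≥ 4 ; first: n is not a value
      have hnv : ∀ i, 1 ≤ i → c i ≠ n := by
        intro i hi hci
        have hS := S (n-1) (by omega)
        rw [show n - 1 + 1 = n from by omega] at hS
        have hno : ¬ ∃ i, 1 ≤ i ∧ i ≤ n - 1 ∧ c i = n := by
          rw [hS]
          exact Nat.not_odd_iff_even.mpr he
        have hile : i ≤ n - 1 := by
          have := idxle i (n-1) hi (by omega) (by omega)
          omega
        exact hno ⟨i, hi, hile, hci⟩
      obtain ⟨j, hj2, hcj⟩ := isValue n (by omega)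
      rcases hcj with h' | h'
      · exact absurd h' (hnv j (by omega))
      · exact (hrec n (by omega)).1
          (iff_of_true ⟨j, by omega, idxle j n (by omega) h' (by omega), h'⟩ he)
  intro m
  induction m using Nat.strong_induction_on with
  | _ m ih =>
    intro hodd h7
    by_cases hm : m = 7
    · exact ⟨4, by omega, by rw [hm]; exact c4⟩
    · have h9 : 9 ≤ m := by obtain ⟨t, ht⟩ := hodd; omega
      have hodd' : Odd (m - 2) := by obtain ⟨t, ht⟩ := hodd; exact ⟨t - 1, by omega⟩
      obtain ⟨k, hk1, hck⟩ := ih (m - 2) (by omega) hodd' (by omega)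
      have hk2 : 2 ≤ k := by
        rcases Nat.lt_or_ge k 2 with h | h
        · interval_cases k <;> omega
        · exact h
      rcases step k hk2 with hs | hs
      · have heven : Even (c (k+1)) := by
          rw [hs, hck]
          obtain ⟨t, ht⟩ := hodd
          exact ⟨t, by omega⟩
        have hQ := Q (k+1) (by omega) heven
        exact ⟨k + 2, by omega, by rw [show k + 2 = k + 1 + 1 from rfl, hQ, hs, hck]; omega⟩
      · exact ⟨k + 1, by omega, by rw [hs, hck]; omega⟩
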